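/- arXiv:2207.10275 — 5 statements merged into one kernel-verified Lean document; each statement's English description precedes it below -/
import Mathlib

section
/- Let T > 0, let h : ℝ → ℝ be differentiable on [0, T], and let α : ℝ → ℝ be a locally Lipschitz, monotone increasing function with α(0) = 0 (an extended class-K function). If h(0) < 0 and h'(t) ≤ α(−h(t)) for all t ∈ [0, T], then h(t) < 0 for all t ∈ [0, T]. -/
/-- Comparison lemma for control barrier functions (Lemma 2):
if `h 0 < 0` and the derivative of `h` satisfies `h' t ≤ α (-h t)` on `[0, T]`
for a locally Lipschitz, monotone increasing `α` with `α 0 = 0`,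
then `h` stays strictly negative on `[0, T]`. -/
theorem cbf_comparison_lemma
    (T : ℝ) (hT : 0 < T) (h α : ℝ → ℝ)
    (hdiff : DifferentiableOn ℝ h (Set.Icc 0 T))
    (hlip : LocallyLipschitz α) (hmono : Monotone α) (hα0 : α 0 = 0)
    (h0 : h 0 < 0)
    (hineq : ∀ t ∈ Set.Icc (0 : ℝ) T, derivWithin h (Set.Icc 0 T) t ≤ α (-h t)) :
    ∀ t ∈ Set.Icc (0 : ℝ) T, h t < 0 := by
  by_contra hcon
  push_neg at hcon
  obtain ⟨t₀, ht₀, ht₀0⟩ := hcon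
  have hcont : ContinuousOn h (Set.Icc 0 T) := hdiff.continuousOn
  set A : Set ℝ := Set.Icc 0 T ∩ h ⁻¹' Set.Ici 0 with hA
  have hAne : A.Nonempty := ⟨t₀, ht₀, ht₀0⟩
  have hAclosed : IsClosed A :=
    hcont.preimage_isClosed_of_isClosed isClosed_Icc isClosed_Ici
  have hAbdd : BddBelow A := ⟨0, fun x hx => hx.1.1⟩
  set s := sInf A with hs
  have hsA : s ∈ A := hAclosed.csInf_mem hAne hAbdd
  have hsIcc : s ∈ Set.Icc 0 T := hsA.1
  have hlt : ∀ t, 0 ≤ t → t < s → h t < 0 := by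
    intro t ht1 ht2
    by_contra hc
    push_neg at hc
    have : t ∈ A := ⟨⟨ht1, ht2.le.trans hsIcc.2⟩, hc⟩
    exact absurd (csInf_le hAbdd this) (not_le.2 ht2)
  have hspos : 0 < s := by
    rcases lt_or_eq_of_le hsIcc.1 with hp | hp
    · exact hp
    · exact absurd (hp ▸ hsA.2 : (0:ℝ) ≤ h 0) (not_le.2 h0)
  -- h s = 0
  have hhs : h s = 0 := by
    refine le_antisymm ?_ hsA.2
    have hne : (nhdsWithin s (Set.Ico 0 s)).NeBot := by
      apply mem_closure_iff_nhdsWithin_neBot.1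
      rw [closure_Ico hspos.ne]
      exact ⟨hspos.le, le_rfl⟩
    have htend : Filter.Tendsto h (nhdsWithin s (Set.Ico 0 s)) (nhds (h s)) := by
      have := (hcont s hsIcc).tendsto
      exact this.mono_left (nhdsWithin_mono s (fun x hx => ⟨hx.1, hx.2.le.trans hsIcc.2⟩))
    refine le_of_tendsto htend ?_
    exact Filter.eventually_of_mem self_mem_nhdsWithin fun x hx => (hlt x hx.1 hx.2).le
  -- Lipschitz near 0
  obtain ⟨K, U, hU, hlipU⟩ := hlip 0
  obtain ⟨δ, hδpos, hball⟩ := Metric.mem_nhds_iff.1 hU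
  -- choose t₁ < s with |h t| < δ on [t₁, s]
  obtain ⟨ε, hεpos, hε⟩ := Metric.continuousWithinAt_iff.1 (hcont s hsIcc) δ hδpos
  set t₁ : ℝ := max 0 (s - ε / 2) with ht₁def
  have ht₁lt : t₁ < s := by
    apply max_lt hspos
    linarith
  have ht₁0 : 0 ≤ t₁ := le_max_left _ _
  have hsmall : ∀ t, t₁ ≤ t → t ≤ s → |h t| < δ := by
    intro t ha hb
    have htIcc : t ∈ Set.Icc 0 T := ⟨ht₁0.trans ha, hb.trans hsIcc.2⟩
    have hd : dist t s < ε := by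
      rw [Real.dist_eq, abs_of_nonpos (by linarith)]
      have : s - ε / 2 ≤ t₁ := le_max_right _ _
      linarith
    have := hε htIcc hd
    rwa [hhs, Real.dist_eq, sub_zero] at this
  -- Gronwall: g t = exp(K t) * h t is antitone on [t₁, s]
  set g : ℝ → ℝ := fun t => Real.exp (K * t) * h t with hg
  have hsub : Set.Icc t₁ s ⊆ Set.Icc 0 T :=
    Set.Icc_subset_Icc ht₁0 hsIcc.2
  have hintsub : Set.Ioo t₁ s ⊆ interior (Set.Icc 0 T) := by
    rw [interior_Icc]
    intro x hx
    exact ⟨lt_of_le_of_lt ht₁0 hx.1, lt_of_lt_of_le hx.2 hsIcc.2⟩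
  have hIccnhds : ∀ x ∈ Set.Ioo t₁ s, Set.Icc 0 T ∈ nhds x := fun x hx =>
    mem_nhds_iff.2 ⟨interior (Set.Icc 0 T), interior_subset, isOpen_interior, hintsub hx⟩
  have hderiv : ∀ x ∈ Set.Ioo t₁ s,
      HasDerivAt h (derivWithin h (Set.Icc 0 T) x) x := by
    intro x hx
    have hdx := (hdiff x (hsub ⟨hx.1.le, hx.2.le⟩)).hasDerivWithinAt
    exact hdx.hasDerivAt (hIccnhds x hx)
  have hganti : AntitoneOn g (Set.Icc t₁ s) := by
    apply antitoneOn_of_deriv_nonpos (convex_Icc _ _)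
    · exact (Real.continuous_exp.comp (continuous_const.mul continuous_id)).continuousOn.mul
        (hcont.mono hsub)
    · rw [interior_Icc]
      intro x hx
      exact (((Real.differentiable_exp.comp ((differentiable_const _).mul differentiable_id)).differentiableAt).mul
        (hderiv x hx).differentiableAt).differentiableWithinAt
    · rw [interior_Icc]
      intro x hx
      have hhd := hderiv x hx
      have hexp : HasDerivAt (fun t => Real.exp ((K : ℝ) * t)) (Real.exp ((K:ℝ) * x) * K) x := by
        have := (Real.hasDerivAt_exp ((K:ℝ) * x)).comp x ((hasDerivAt_id x).const_mul (K : ℝ))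
        simpa [Function.comp_def] using this
      have hgd : HasDerivAt g
          (Real.exp ((K:ℝ) * x) * K * h x + Real.exp ((K:ℝ) * x) * derivWithin h (Set.Icc 0 T) x) x :=
        hexp.mul hhd
      rw [hgd.deriv]
      have hxneg : h x ≤ 0 := (hlt x (ht₁0.trans hx.1.le) hx.2).le
      have hxsmall : |h x| < δ := hsmall x hx.1.le hx.2.le
      have hmem : -h x ∈ U := hball (by simpa [abs_neg] using hxsmall)
      have h0mem : (0 : ℝ) ∈ U := hball (by simpa using hδpos)
      have hlb : α (-h x) ≤ K * (-h x) := by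
        have := hlipU.dist_le_mul (-h x) hmem 0 h0mem
        rw [Real.dist_eq, Real.dist_eq, hα0, sub_zero, sub_zero] at this
        calc α (-h x) ≤ |α (-h x)| := le_abs_self _
          _ ≤ K * |(-h x)| := this
          _ = K * (-h x) := by rw [abs_of_nonneg (by linarith)]
      have hd : derivWithin h (Set.Icc 0 T) x ≤ α (-h x) :=
        hineq x (hsub ⟨hx.1.le, hx.2.le⟩)
      have hepos : (0:ℝ) < Real.exp (K * x) := Real.exp_pos _
      nlinarith [hd.trans hlb]
  have hgs : g s = 0 := by simp [hg, hhs]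
  have hgt₁ : g t₁ < 0 :=
    mul_neg_of_pos_of_neg (Real.exp_pos _) (hlt t₁ ht₁0 ht₁lt)
  have := hganti (Set.left_mem_Icc.2 ht₁lt.le) (Set.right_mem_Icc.2 ht₁lt.le) ht₁lt.le
  rw [hgs] at this
  linarith
end

section
/- Let E be a real inner product space, let T > 0, d > 0, a > 0, Δ ≥ 0, and let p_i, p_j : ℝ → E be differentiable on [0, T]. Define the inter-agent distance r(t) = ‖p_i(t) − p_j(t)‖ and suppose: (i) r(0) > d; (ii) r(t) ≥ d for all t ∈ [0, T]; (iii) ‖p_i'(t) − p_j'(t)‖ ≤ a·r(t) + Δ for all t ∈ [0, T]; and (iv) r(T) = d. Then T ≥ (1/a)·log( 1 / (1 − (r(0) − d)/k₁) ), where k₁ = r(0) + Δ/a. -/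
open Real


/-- Theorem 1 (critical time period for inter-agent safety): if the inter-agent
distance `r t = ‖pi t - pj t‖` starts above the safety distance `d`, stays at
least `d` on `[0, T]`, the relative velocity satisfies
`‖pi' t - pj' t‖ ≤ a * r t + Δ`, and `r T = d`, then
`T ≥ (1 / a) * log (1 / (1 - (r 0 - d) / k₁))` with `k₁ = r 0 + Δ / a`. -/
theorem critical_time_interagent
    {E : Type*} [NormedAddCommGroup E] [InnerProductSpace ℝ E]
    (T d a Δ : ℝ) (hT : 0 < T) (hd : 0 < d) (ha : 0 < a) (hΔ : 0 ≤ Δ)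
    (pi pj pi' pj' : ℝ → E)
    (hpi : ∀ t ∈ Set.Icc (0 : ℝ) T, HasDerivWithinAt pi (pi' t) (Set.Icc 0 T) t)
    (hpj : ∀ t ∈ Set.Icc (0 : ℝ) T, HasDerivWithinAt pj (pj' t) (Set.Icc 0 T) t)
    (r : ℝ → ℝ) (hr : r = fun t => ‖pi t - pj t‖)
    (h0 : r 0 > d)
    (hge : ∀ t ∈ Set.Icc (0 : ℝ) T, d ≤ r t)
    (hvel : ∀ t ∈ Set.Icc (0 : ℝ) T, ‖pi' t - pj' t‖ ≤ a * r t + Δ)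
    (hTd : r T = d) :
    T ≥ (1 / a) * Real.log (1 / (1 - (r 0 - d) / (r 0 + Δ / a))) := by
  -- q = pi - pj, with derivative q' within [0,T]
  set q : ℝ → E := fun t => pi t - pj t with hq
  set q' : ℝ → E := fun t => pi' t - pj' t with hq'
  have hqd : ∀ t ∈ Set.Icc (0 : ℝ) T, HasDerivWithinAt q (q' t) (Set.Icc 0 T) t :=
    fun t ht => (hpi t ht).sub (hpj t ht)
  -- reversed function f s = q (T - s)
  set f : ℝ → E := fun s => q (T - s) with hf
  set f' : ℝ → E := fun s => -q' (T - s) with hf'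
  have hmem : ∀ s ∈ Set.Icc (0 : ℝ) T, T - s ∈ Set.Icc (0 : ℝ) T := by
    intro s hs; constructor <;> [linarith [hs.2]; linarith [hs.1]]
  have hfd : ∀ s ∈ Set.Icc (0 : ℝ) T, HasDerivWithinAt f (f' s) (Set.Icc 0 T) s := by
    intro s hs
    have h1 : HasDerivWithinAt (fun s : ℝ => T - s) (-1) (Set.Icc 0 T) s :=
      ((hasDerivAt_id s).const_sub T).hasDerivWithinAt
    have := (hqd (T - s) (hmem s hs)).scomp s h1 (fun x hx => hmem x hx)
    simpa [hf, hf', Function.comp_def] using this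
  have hfc : ContinuousOn f (Set.Icc 0 T) := fun s hs => (hfd s hs).continuousWithinAt
  have hfd' : ∀ s ∈ Set.Ico (0 : ℝ) T, HasDerivWithinAt f (f' s) (Set.Ici s) s := by
    intro s hs
    refine (hfd s ⟨hs.1, hs.2.le⟩).mono_of_mem_nhdsWithin ?_
    have : Set.Ico s T ∈ nhdsWithin s (Set.Ici s) := by
      rw [← Set.Ici_inter_Iio]
      exact inter_mem_nhdsWithin _ (Iio_mem_nhds hs.2)
    exact Filter.mem_of_superset this (fun x hx => ⟨le_trans hs.1 hx.1, hx.2.le⟩)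
  have bound : ∀ s ∈ Set.Ico (0 : ℝ) T, ‖f' s‖ ≤ a * ‖f s‖ + Δ := by
    intro s hs
    have h1 := hvel (T - s) (hmem s ⟨hs.1, hs.2.le⟩)
    simpa [hf, hf', hr, hq, hq', norm_sub_rev (pj' (T-s))] using h1
  have hf0 : ‖f 0‖ ≤ d := by
    have : ‖f 0‖ = r T := by simp [hf, hr, hq]
    rw [this, hTd]
  have key := norm_le_gronwallBound_of_norm_deriv_right_le hfc hfd' hf0 bound T
    ⟨hT.le, le_refl T⟩
  rw [gronwallBound_of_K_ne_0 ha.ne'] at key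
  have hfT : ‖f T‖ = r 0 := by simp [hf, hr, hq]
  rw [hfT, sub_zero] at key
  -- key : r 0 ≤ d * exp (a*T) + Δ / a * (exp (a*T) - 1)
  have hDa : 0 ≤ Δ / a := div_nonneg hΔ ha.le
  have hk1 : 0 < r 0 + Δ / a := by linarith
  have hdk : 0 < d + Δ / a := by linarith
  have hmain : r 0 + Δ / a ≤ (d + Δ / a) * exp (a * T) := by
    have h2 : Δ / a * (exp (a * T) - 1) = Δ / a * exp (a * T) - Δ / a := by ring
    nlinarith [key]
  have hfrac : 1 - (r 0 - d) / (r 0 + Δ / a) = (d + Δ / a) / (r 0 + Δ / a) := by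
    rw [eq_div_iff hk1.ne', sub_mul, div_mul_cancel₀ _ hk1.ne']
    ring
  rw [hfrac, one_div_div]
  have hlog : Real.log ((r 0 + Δ / a) / (d + Δ / a)) ≤ a * T := by
    rw [Real.log_le_iff_le_exp (by positivity)]
    rw [div_le_iff₀ hdk] at *
    linarith [hmain]
  have := mul_le_mul_of_nonneg_left hlog (le_of_lt (one_div_pos.mpr ha))
  calc (1 / a) * Real.log ((r 0 + Δ / a) / (d + Δ / a)) ≤ 1 / a * (a * T) := this
    _ = T := by field_simp
end

section
/- Let E be a real inner product space, let T > 0, d > 0, b_f > 0, Δ ≥ 0, let f : E → E be Lipschitz with constant b_f, and let p_i, p_j : ℝ → E and w_i, w_j : ℝ → E satisfy p_i'(t) = f(p_i(t)) + w_i(t) and p_j'(t) = f(p_j(t)) + w_j(t) with ‖w_i(t) − w_j(t)‖ ≤ Δ for all t ∈ [0, T]. Define r(t) = ‖p_i(t) − p_j(t)‖ and suppose r(0) > d, r(t) ≥ d for all t ∈ [0, T], and r(T) = d. Then T ≥ (1/b_f)·log( 1 / (1 − (r(0) − d)/k₁) ), where k₁ = r(0) + Δ/b_f. -/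
/-- Variant of Theorem 1 with the relative-velocity bound derived from the
dynamics: both agents move under the same Lipschitz drift `f` (constant `b_f`)
plus inputs `wi`, `wj` with `‖wi t - wj t‖ ≤ Δ`; if the inter-agent distance
`r t = ‖pi t - pj t‖` starts above `d`, stays at least `d` on `[0, T]`, and
reaches the safety boundary `r T = d`, then
`T ≥ (1 / b_f) * log (1 / (1 - (r 0 - d) / k₁))` with `k₁ = r 0 + Δ / b_f`. -/
theorem critical_time_interagent_dynamics
    {E : Type*} [NormedAddCommGroup E] [InnerProductSpace ℝ E]
    (T d bf Δ : ℝ) (hT : 0 < T) (hd : 0 < d) (hbf : 0 < bf) (hΔ : 0 ≤ Δ)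
    (f : E → E) (hf : LipschitzWith (Real.toNNReal bf) f)
    (pi pj wi wj : ℝ → E)
    (hpi : ∀ t ∈ Set.Icc (0 : ℝ) T,
      HasDerivWithinAt pi (f (pi t) + wi t) (Set.Icc 0 T) t)
    (hpj : ∀ t ∈ Set.Icc (0 : ℝ) T,
      HasDerivWithinAt pj (f (pj t) + wj t) (Set.Icc 0 T) t)
    (hw : ∀ t ∈ Set.Icc (0 : ℝ) T, ‖wi t - wj t‖ ≤ Δ)
    (r : ℝ → ℝ) (hr : r = fun t => ‖pi t - pj t‖)
    (h0 : r 0 > d)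
    (hge : ∀ t ∈ Set.Icc (0 : ℝ) T, d ≤ r t)
    (hTd : r T = d) :
    T ≥ (1 / bf) * Real.log (1 / (1 - (r 0 - d) / (r 0 + Δ / bf))) := by
  -- time-reversed difference
  set q : ℝ → E := fun s => pi (T - s) - pj (T - s) with hq
  set q' : ℝ → E := fun s =>
    ((f (pj (T - s)) + wj (T - s)) - (f (pi (T - s)) + wi (T - s))) with hq'
  have hmaps : Set.MapsTo (fun s : ℝ => T - s) (Set.Icc 0 T) (Set.Icc 0 T) := by
    intro s hs
    simp only [Set.mem_Icc] at hs ⊢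
    constructor <;> linarith [hs.1, hs.2]
  have hinner : ∀ t : ℝ, HasDerivWithinAt (fun s : ℝ => T - s) (-1) (Set.Icc 0 T) t := by
    intro t
    simpa using ((hasDerivAt_id' t).const_sub T).hasDerivWithinAt
      (s := Set.Icc 0 T)
  have hqderiv : ∀ t ∈ Set.Icc (0 : ℝ) T,
      HasDerivWithinAt q (q' t) (Set.Icc 0 T) t := by
    intro t ht
    have hu : T - t ∈ Set.Icc (0 : ℝ) T := hmaps ht
    have h1 := (hpi (T - t) hu).scomp t (hinner t) hmaps
    have h2 := (hpj (T - t) hu).scomp t (hinner t) hmaps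
    have := h1.sub h2
    convert this using 1
    · rfl
    simp [hq', neg_smul, one_smul]
    abel
  have hqcont : ContinuousOn q (Set.Icc 0 T) :=
    fun t ht => (hqderiv t ht).continuousWithinAt
  have hbfc : ((Real.toNNReal bf : NNReal) : ℝ) = bf := Real.coe_toNNReal bf hbf.le
  have hbound : ∀ t ∈ Set.Ico (0 : ℝ) T, ‖q' t‖ ≤ bf * ‖q t‖ + Δ := by
    intro t ht
    have hu : T - t ∈ Set.Icc (0 : ℝ) T := hmaps (Set.mem_Icc_of_Ico ht)
    have hlip : ‖f (pj (T - t)) - f (pi (T - t))‖ ≤ bf * ‖pj (T - t) - pi (T - t)‖ := by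
      have := hf.dist_le_mul (pj (T - t)) (pi (T - t))
      rwa [dist_eq_norm, dist_eq_norm, hbfc] at this
    have hw' : ‖wj (T - t) - wi (T - t)‖ ≤ Δ := by
      rw [norm_sub_rev]; exact hw (T - t) hu
    have : q' t = (f (pj (T - t)) - f (pi (T - t))) + (wj (T - t) - wi (T - t)) := by
      simp [hq']; abel
    rw [this]
    calc ‖(f (pj (T - t)) - f (pi (T - t))) + (wj (T - t) - wi (T - t))‖
        ≤ ‖f (pj (T - t)) - f (pi (T - t))‖ + ‖wj (T - t) - wi (T - t)‖ := norm_add_le _ _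
      _ ≤ bf * ‖pj (T - t) - pi (T - t)‖ + Δ := add_le_add hlip hw'
      _ = bf * ‖q t‖ + Δ := by rw [norm_sub_rev]
  have hq0 : ‖q 0‖ ≤ d := by
    simp only [hq, sub_zero]
    rw [← hTd, hr]
  have hderiv' : ∀ t ∈ Set.Ico (0 : ℝ) T, HasDerivWithinAt q (q' t) (Set.Ici t) t := by
    intro t ht
    exact (hqderiv t (Set.mem_Icc_of_Ico ht)).mono_of_mem_nhdsWithin (Icc_mem_nhdsGE_of_mem ht)
  have hgron := norm_le_gronwallBound_of_norm_deriv_right_le hqcont hderiv' hq0 hbound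
    T (Set.right_mem_Icc.2 hT.le)
  have hqT : ‖q T‖ = r 0 := by simp [hq, hr]
  rw [hqT, sub_zero, gronwallBound_of_K_ne_0 hbf.ne'] at hgron
  -- now algebra
  set R := r 0 with hR
  have hkey : R + Δ / bf ≤ (d + Δ / bf) * Real.exp (bf * T) := by
    have h1 : R ≤ d * Real.exp (bf * T) + Δ / bf * (Real.exp (bf * T) - 1) := hgron
    have : Δ / bf * (Real.exp (bf * T) - 1) = Δ / bf * Real.exp (bf * T) - Δ / bf := by ring
    nlinarith [Real.exp_pos (bf * T)]
  have hD : 0 < d + Δ / bf := by positivity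
  have hk1 : 0 < R + Δ / bf := by
    have h1 : 0 ≤ Δ / bf := by positivity
    linarith
  have hfrac : 1 - (R - d) / (R + Δ / bf) = (d + Δ / bf) / (R + Δ / bf) := by
    rw [eq_div_iff hk1.ne', sub_mul, div_mul_cancel₀ _ hk1.ne', one_mul]
    ring
  rw [hfrac, one_div_div]
  have hx : 0 < (R + Δ / bf) / (d + Δ / bf) := by positivity
  have hlog : Real.log ((R + Δ / bf) / (d + Δ / bf)) ≤ bf * T := by
    rw [Real.log_le_iff_le_exp hx]
    rw [div_le_iff₀ hD]
    linarith [hkey]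
  rw [ge_iff_le, one_div, inv_mul_le_iff₀ hbf]
  linarith [hlog]
end

section
/- Let E be a real inner product space, let T > 0, ρ > 0, a > 0, let c ∈ E, and let p : ℝ → E be differentiable on [0, T]. Define v(t) = ‖p(t) − c‖ and suppose: (i) v(0) > ρ; (ii) v(t) ≥ ρ for all t ∈ [0, T]; (iii) ‖p'(t)‖ ≤ a·(v(t) + ρ) for all t ∈ [0, T]; and (iv) v(T) = ρ. Then T ≥ (1/a)·log( 1 / (1 − (v(0) − ρ)/(v(0) + ρ)) ). -/
/-- Theorem 2 (critical time period for agent-to-obstacle safety): for a static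
spherical obstacle with center `c` and radius `ρ`, if the distance
`v t = ‖p t - c‖` starts above `ρ`, stays at least `ρ` on `[0, T]`, the speed
satisfies `‖p' t‖ ≤ a * (v t + ρ)`, and `v T = ρ`, then
`T ≥ (1 / a) * log (1 / (1 - (v 0 - ρ) / (v 0 + ρ)))`. -/
theorem critical_time_obstacle
    {E : Type*} [NormedAddCommGroup E] [InnerProductSpace ℝ E]
    (T ρ a : ℝ) (hT : 0 < T) (hρ : 0 < ρ) (ha : 0 < a) (c : E)
    (p p' : ℝ → E)
    (hp : ∀ t ∈ Set.Icc (0 : ℝ) T, HasDerivWithinAt p (p' t) (Set.Icc 0 T) t)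
    (v : ℝ → ℝ) (hv : v = fun t => ‖p t - c‖)
    (h0 : v 0 > ρ)
    (hge : ∀ t ∈ Set.Icc (0 : ℝ) T, ρ ≤ v t)
    (hvel : ∀ t ∈ Set.Icc (0 : ℝ) T, ‖p' t‖ ≤ a * (v t + ρ))
    (hTρ : v T = ρ) :
    T ≥ (1 / a) * Real.log (1 / (1 - (v 0 - ρ) / (v 0 + ρ))) := by
  set f : ℝ → E := fun s => p (T - s) - c with hf
  set f' : ℝ → E := fun s => -p' (T - s) with hf'
  have hmem : ∀ s ∈ Set.Icc (0 : ℝ) T, T - s ∈ Set.Icc (0 : ℝ) T := by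
    intro s hs
    exact ⟨by linarith [hs.2], by linarith [hs.1]⟩
  have hderiv : ∀ s ∈ Set.Icc (0 : ℝ) T,
      HasDerivWithinAt f (f' s) (Set.Icc 0 T) s := by
    intro s hs
    have h1 : HasDerivWithinAt p (p' (T - s)) (Set.Icc 0 T) (T - s) :=
      hp _ (hmem s hs)
    have hg : HasDerivWithinAt (fun s' : ℝ => T - s') (-1) (Set.Icc 0 T) s := by
      simpa using ((hasDerivAt_id' s).const_sub T).hasDerivWithinAt
        (s := Set.Icc 0 T)
    have := HasDerivWithinAt.scomp s h1 hg (fun s' hs' => hmem s' hs')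
    simpa [f, f', neg_one_smul] using this.sub_const c
  have hcont : ContinuousOn f (Set.Icc 0 T) := fun s hs =>
    (hderiv s hs).continuousWithinAt
  have hderiv' : ∀ s ∈ Set.Ico (0 : ℝ) T,
      HasDerivWithinAt f (f' s) (Set.Ici s) s := by
    intro s hs
    apply (hderiv s ⟨hs.1, hs.2.le⟩).mono_of_mem_nhdsWithin
    have h1 : Set.Iic T ∈ nhdsWithin s (Set.Ici s) :=
      mem_nhdsWithin_of_mem_nhds (Iic_mem_nhds hs.2)
    have h2 : Set.Iic T ∩ Set.Ici s ⊆ Set.Icc 0 T := fun x hx =>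
      ⟨le_trans hs.1 hx.2, hx.1⟩
    exact Filter.mem_of_superset (Filter.inter_mem h1 self_mem_nhdsWithin) h2
  have hbound : ∀ s ∈ Set.Ico (0 : ℝ) T, ‖f' s‖ ≤ a * ‖f s‖ + a * ρ := by
    intro s hs
    have := hvel (T - s) (hmem s ⟨hs.1, hs.2.le⟩)
    simp only [f', norm_neg, f]
    rw [hv] at this
    calc ‖p' (T - s)‖ ≤ a * (‖p (T - s) - c‖ + ρ) := this
      _ = a * ‖p (T - s) - c‖ + a * ρ := by ring
  have hf0 : ‖f 0‖ ≤ ρ := by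
    simp only [f, sub_zero]
    rw [hv] at hTρ; simp only [] at hTρ; rw [hTρ]
  have key := norm_le_gronwallBound_of_norm_deriv_right_le hcont hderiv' hf0 hbound
      T ⟨hT.le, le_refl T⟩
  rw [gronwallBound_of_K_ne_0 ha.ne'] at key
  have hfT : ‖f T‖ = v 0 := by simp [f, hv]
  rw [hfT, sub_zero] at key
  have hk : v 0 + ρ ≤ 2 * ρ * Real.exp (a * T) := by
    have hdiv : a * ρ / a = ρ := by field_simp
    rw [hdiv] at key
    simp only [] at key
    nlinarith [key]
  have hv0 : (0:ℝ) < v 0 + ρ := by linarith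
  have harg : 1 / (1 - (v 0 - ρ) / (v 0 + ρ)) = (v 0 + ρ) / (2 * ρ) := by
    have h1 : 1 - (v 0 - ρ) / (v 0 + ρ) = 2 * ρ / (v 0 + ρ) := by
      field_simp
      ring
    rw [h1, one_div_div]
  rw [harg]
  have hpos : (0:ℝ) < (v 0 + ρ) / (2 * ρ) := by positivity
  have hlog : Real.log ((v 0 + ρ) / (2 * ρ)) ≤ a * T := by
    rw [Real.log_le_iff_le_exp hpos]
    rw [div_le_iff₀ (by positivity)]
    linarith [hk]
  rw [ge_iff_le, one_div, inv_mul_le_iff₀ ha]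
  linarith
end

section
/- Let J and O be finite index sets, let d > 0, n_c ≥ 1 a natural number, and for each j ∈ J let D_j > 0 and η_j > 0, and for each o ∈ O let r_o > 0, V_o > 0 and η_o > 0. Define Γ = max over all j ∈ J and o ∈ O of { d/D_j , r_o/V_o }, Γ^w = 1 − max over all j ∈ J and o ∈ O of { η_j/D_j , η_o/V_o }, S = exp(−Γ^{n_c}) and S^w = exp(−(Γ^w)^{n_c}). Assume Γ^w ≥ 0 and |S − 1| ≤ |S^w − 1|. Then D_j ≥ d + η_j > d for every j ∈ J and V_o ≥ r_o + η_o > r_o for every o ∈ O; in particular all inter-agent and agent-to-obstacle safety constraints hold strictly. -/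
/-- Theorem 3 (safety behavior monitor): if the deviation `|S - 1|` of the
safety behavior metric `S = exp (-Γ ^ n_c)` from its nominal value `1` stays
within the worst-case threshold `|S^w - 1|` determined by the critical zones
`η_j`, `η_o`, then all inter-agent and agent-to-obstacle safety constraints
hold strictly with margin given by the critical zones. -/
theorem safety_behavior_monitor
    {α β : Type*} (J : Finset α) (O : Finset β)
    (d : ℝ) (hd : 0 < d) (nc : ℕ) (hnc : 1 ≤ nc)
    (D η : α → ℝ) (hD : ∀ j ∈ J, 0 < D j) (hη : ∀ j ∈ J, 0 < η j)
    (r V ηo : β → ℝ) (hr : ∀ o ∈ O, 0 < r o) (hV : ∀ o ∈ O, 0 < V o)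
    (hηo : ∀ o ∈ O, 0 < ηo o)
    (Γ Γw S Sw : ℝ)
    (hΓ : Γ = sSup ((fun j => d / D j) '' ↑J ∪ (fun o => r o / V o) '' ↑O))
    (hΓw : Γw = 1 - sSup ((fun j => η j / D j) '' ↑J ∪
      (fun o => ηo o / V o) '' ↑O))
    (hS : S = Real.exp (-Γ ^ nc)) (hSw : Sw = Real.exp (-Γw ^ nc))
    (hΓw0 : 0 ≤ Γw) (hle : |S - 1| ≤ |Sw - 1|) :
    (∀ j ∈ J, d + η j ≤ D j ∧ d < D j) ∧
    (∀ o ∈ O, r o + ηo o ≤ V o ∧ r o < V o) := by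
  set A : Set ℝ := (fun j => d / D j) '' ↑J ∪ (fun o => r o / V o) '' ↑O with hA
  set B : Set ℝ := (fun j => η j / D j) '' ↑J ∪ (fun o => ηo o / V o) '' ↑O with hB
  have hAfin : A.Finite := (J.finite_toSet.image _).union (O.finite_toSet.image _)
  have hBfin : B.Finite := (J.finite_toSet.image _).union (O.finite_toSet.image _)
  have hΓ0 : 0 ≤ Γ := by
    rw [hΓ]
    apply Real.sSup_nonneg
    rintro x (⟨j, hj, rfl⟩ | ⟨o, ho, rfl⟩)
    · exact div_nonneg hd.le (hD j hj).le
    · exact div_nonneg (hr o ho).le (hV o ho).le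
  -- S, Sw ≤ 1
  have hS1 : S ≤ 1 := by
    rw [hS, Real.exp_le_one_iff]
    exact neg_nonpos.mpr (pow_nonneg hΓ0 _)
  have hSw1 : Sw ≤ 1 := by
    rw [hSw, Real.exp_le_one_iff]
    exact neg_nonpos.mpr (pow_nonneg hΓw0 _)
  have hSwS : Sw ≤ S := by
    rw [abs_sub_comm, abs_of_nonneg (by linarith), abs_sub_comm,
      abs_of_nonneg (by linarith)] at hle
    linarith
  have hpow : Γ ^ nc ≤ Γw ^ nc := by
    rw [hS, hSw, Real.exp_le_exp, neg_le_neg_iff] at hSwS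
    exact hSwS
  have hΓΓw : Γ ≤ Γw :=
    (pow_le_pow_iff_left₀ hΓ0 hΓw0 (by omega)).mp hpow
  constructor
  · intro j hj
    have hDj := hD j hj
    have h1 : d / D j ≤ Γ := by
      rw [hΓ]
      exact le_csSup hAfin.bddAbove (Or.inl ⟨j, hj, rfl⟩)
    have h2 : η j / D j ≤ sSup B :=
      le_csSup hBfin.bddAbove (Or.inl ⟨j, hj, rfl⟩)
    have key : d / D j + η j / D j ≤ 1 := by
      rw [hΓw] at hΓΓw; linarith
    rw [← add_div, div_le_one hDj] at key
    exact ⟨key, by have := hη j hj; linarith⟩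
  · intro o ho
    have hVo := hV o ho
    have h1 : r o / V o ≤ Γ := by
      rw [hΓ]
      exact le_csSup hAfin.bddAbove (Or.inr ⟨o, ho, rfl⟩)
    have h2 : ηo o / V o ≤ sSup B :=
      le_csSup hBfin.bddAbove (Or.inr ⟨o, ho, rfl⟩)
    have key : r o / V o + ηo o / V o ≤ 1 := by
      rw [hΓw] at hΓΓw; linarith
    rw [← add_div, div_le_one hVo] at key
    exact ⟨key, by have := hηo o ho; linarith⟩
end
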